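/- If S = {S_{i,j}} is constructed by taking, for each position i and each nonzero letter j, the set of elements whose label (from a labeling where each letter appears at most ⌈n/⌈n/k⌉⌉ ≤ k times per position and all labels are distinct) has letter j in position i, then S is an (n,k)-separating system. -/
import Mathlib


/-- If labels are distinct strings over the alphabet `{0,…,⌈n/k⌉}` where each letter is used
at most `k` times in every position, then the sets `S_{i,j}` (elements whose label has the
nonzero letter `j` in position `i`) form an `(n,k)`-separating system. -/
theorem stmt2 (n k ℓ : ℕ) (hk : 0 < k)
    (L : Fin n → Fin ℓ → Fin ((n + k - 1) / k + 1))
    (hinj : Function.Injective L)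
    (hcount : ∀ (i : Fin ℓ) (c : Fin ((n + k - 1) / k + 1)),
      (Finset.univ.filter (fun x : Fin n => L x i = c)).card ≤ k) :
    (∀ (i : Fin ℓ) (j : Fin ((n + k - 1) / k + 1)), j ≠ 0 →
      (Finset.univ.filter (fun x : Fin n => L x i = j)).card ≤ k) ∧
    (∀ p q : Fin n, p ≠ q →
      ∃ (i : Fin ℓ) (j : Fin ((n + k - 1) / k + 1)), j ≠ 0 ∧
        ((L p i = j ∧ L q i ≠ j) ∨ (L q i = j ∧ L p i ≠ j))) := by
  refine ⟨fun i j _ => hcount i j, fun p q hpq => ?_⟩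
  have hL : L p ≠ L q := fun h => hpq (hinj h)
  obtain ⟨i, hi⟩ := Function.ne_iff.mp hL
  by_cases h0 : L p i = 0
  · exact ⟨i, L q i, fun h => hi (h0.trans h.symm), Or.inr ⟨rfl, fun h => hi h⟩⟩
  · exact ⟨i, L p i, h0, Or.inl ⟨rfl, fun h => hi h.symm⟩⟩
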